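/- arXiv:1708.06447 — 8 statements merged into one kernel-verified Lean document; each statement's English description precedes it below -/
import Mathlib

section
/- Let A be a selfadjoint bounded operator on a complex Hilbert space H with spectrum contained in [γ,Γ]. Let h:[γ,Γ]→ℝ₊ be continuous and nonnegative, and let f,g:[γ,Γ]→ℝ be continuous and h-synchronous on [γ,Γ]. Then for every x ∈ H with ‖x‖ = 1, ⟨h(A)²x,x⟩⟨f(A)g(A)x,x⟩ ≥ ⟨h(A)g(A)x,x⟩⟨h(A)f(A)x,x⟩. -/
open scoped InnerProductSpace

theorem stmt_5 {H : Type*} [NormedAddCommGroup H] [InnerProductSpace ℂ H] [CompleteSpace H]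
    (A : H →L[ℂ] H) (hA : IsSelfAdjoint A) (γ Γ : ℝ) (hγΓ : γ < Γ)
    (hspec : spectrum ℝ A ⊆ Set.Icc γ Γ)
    (h f g : ℝ → ℝ)
    (hh : ContinuousOn h (Set.Icc γ Γ)) (hh0 : ∀ t ∈ Set.Icc γ Γ, 0 ≤ h t)
    (hf : ContinuousOn f (Set.Icc γ Γ)) (hg : ContinuousOn g (Set.Icc γ Γ))
    (hsync : ∀ s ∈ Set.Icc γ Γ, ∀ t ∈ Set.Icc γ Γ,
      0 ≤ (h t * f s - h s * f t) * (h t * g s - h s * g t))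
    (x : H) (hx : ‖x‖ = 1) :
    (⟪(cfc h A * cfc g A) x, x⟫_ℂ).re * (⟪(cfc h A * cfc f A) x, x⟫_ℂ).re ≤
      (⟪((cfc h A) ^ 2) x, x⟫_ℂ).re * (⟪(cfc f A * cfc g A) x, x⟫_ℂ).re := by
  have hsub : spectrum ℝ A ⊆ Set.Icc γ Γ := hspec
  have chh : ContinuousOn h (spectrum ℝ A) := hh.mono hsub
  have chf : ContinuousOn f (spectrum ℝ A) := hf.mono hsub
  have chg : ContinuousOn g (spectrum ℝ A) := hg.mono hsub
  set φ : (ℝ → ℝ) → ℝ := fun k => (⟪(cfc k A) x, x⟫_ℂ).re with hφ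
  have phi_nonneg : ∀ k : ℝ → ℝ, (∀ t ∈ spectrum ℝ A, 0 ≤ k t) → 0 ≤ φ k := by
    intro k hk
    have h1 : (0 : H →L[ℂ] H) ≤ cfc k A := cfc_nonneg hk
    have h2 := ((ContinuousLinearMap.nonneg_iff_isPositive _).mp h1).inner_nonneg_left x
    simpa [hφ] using (Complex.le_def.mp h2).1
  have phi_lin : ∀ (a b c d : ℝ) (p q r w : ℝ → ℝ),
      ContinuousOn p (spectrum ℝ A) → ContinuousOn q (spectrum ℝ A) →
      ContinuousOn r (spectrum ℝ A) → ContinuousOn w (spectrum ℝ A) →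
      φ (fun s => a * p s + b * q s - c * r s - d * w s)
        = a * φ p + b * φ q - c * φ r - d * φ w := by
    intro a b c d p q r w hp hq hr hw
    have e1 : cfc (fun s => a * p s + b * q s - c * r s - d * w s) A
        = a • cfc p A + b • cfc q A - c • cfc r A - d • cfc w A := by
      rw [cfc_sub _ _ A (by fun_prop) (by fun_prop)]
      rw [cfc_sub _ _ A (by fun_prop) (by fun_prop)]
      rw [cfc_add A _ _ (by fun_prop) (by fun_prop)]
      rw [cfc_const_mul a p A hp, cfc_const_mul b q A hq,
        cfc_const_mul c r A hr, cfc_const_mul d w A hw]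
    rw [hφ]
    simp only [e1, ContinuousLinearMap.sub_apply, ContinuousLinearMap.add_apply,
      ContinuousLinearMap.smul_apply, inner_sub_left, inner_add_left,
      Complex.sub_re, Complex.add_re]
    rw [RCLike.real_smul_eq_coe_smul (K := ℂ) a, RCLike.real_smul_eq_coe_smul (K := ℂ) b,
      RCLike.real_smul_eq_coe_smul (K := ℂ) c, RCLike.real_smul_eq_coe_smul (K := ℂ) d]
    simp only [inner_smul_real_left, Complex.smul_re, smul_eq_mul]
  set c1 := φ (fun s => f s * g s) with hc1
  set c2 := φ (fun s => h s * h s) with hc2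
  set c3 := φ (fun s => h s * f s) with hc3
  set c4 := φ (fun s => h s * g s) with hc4
  have key : ∀ t ∈ spectrum ℝ A,
      0 ≤ c1 * (h t * h t) + c2 * (f t * g t) - c4 * (h t * f t) - c3 * (h t * g t) := by
    intro t ht
    have ht' := hsub ht
    have hk : ∀ s ∈ spectrum ℝ A, 0 ≤ (h t * h t) * (f s * g s) + (f t * g t) * (h s * h s)
        - (h t * g t) * (h s * f s) - (h t * f t) * (h s * g s) := by
      intro s hs
      have := hsync s (hsub hs) t ht'
      nlinarith [this]
    have := phi_nonneg _ hk
    rw [phi_lin (h t * h t) (f t * g t) (h t * g t) (h t * f t)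
      (fun s => f s * g s) (fun s => h s * h s) (fun s => h s * f s) (fun s => h s * g s)
      (chf.mul chg) (chh.mul chh) (chh.mul chf) (chh.mul chg)] at this
    rw [hc1, hc2, hc3, hc4]
    linarith
  have hψ : 0 ≤ φ (fun t => c1 * (h t * h t) + c2 * (f t * g t)
      - c4 * (h t * f t) - c3 * (h t * g t)) := phi_nonneg _ key
  rw [phi_lin c1 c2 c4 c3 (fun s => h s * h s) (fun s => f s * g s)
    (fun s => h s * f s) (fun s => h s * g s)
    (chh.mul chh) (chf.mul chg) (chh.mul chf) (chh.mul chg)] at hψ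
  have e2 : cfc h A * cfc g A = cfc (fun s => h s * g s) A := (cfc_mul h g A chh chg).symm
  have e3 : cfc h A * cfc f A = cfc (fun s => h s * f s) A := (cfc_mul h f A chh chf).symm
  have e4 : cfc f A * cfc g A = cfc (fun s => f s * g s) A := (cfc_mul f g A chf chg).symm
  have e5 : (cfc h A) ^ 2 = cfc (fun s => h s * h s) A := by
    rw [sq, ← cfc_mul h h A chh chh]
  rw [e2, e3, e4, e5]
  show c4 * c3 ≤ c2 * c1
  nlinarith [hψ]
end

section
/- Let A be a selfadjoint bounded operator on a complex Hilbert space H with spectrum in [γ,Γ], h:[γ,Γ]→ℝ₊ continuous nonnegative, and f,g:[γ,Γ]→ℝ continuous and h-asynchronous on [γ,Γ]. Then for every unit vector x ∈ H, ⟨h(A)²x,x⟩⟨f(A)g(A)x,x⟩ ≤ ⟨h(A)g(A)x,x⟩⟨h(A)f(A)x,x⟩. -/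
open scoped InnerProductSpace

/-- If `φ ≤ 0` on the spectrum of a selfadjoint `A`, then the quadratic form of `cfc φ A`
is nonpositive. -/
lemma aux_cfc_nonpos_inner {H : Type*} [NormedAddCommGroup H] [InnerProductSpace ℂ H]
    [CompleteSpace H] (A : H →L[ℂ] H) (hA : IsSelfAdjoint A) (φ : ℝ → ℝ)
    (hφ : ∀ t ∈ spectrum ℝ A, φ t ≤ 0) (x : H) :
    (⟪(cfc φ A) x, x⟫_ℂ).re ≤ 0 := by
  have h1 : cfc φ A ≤ 0 := cfc_nonpos φ A hφ
  rw [← neg_nonneg, ContinuousLinearMap.nonneg_iff_isPositive] at h1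
  have h2 := h1.inner_nonneg_left x
  simp only [ContinuousLinearMap.neg_apply, inner_neg_left] at h2
  have h3 := (Complex.le_def.mp h2).1
  simpa using h3

/-- Decomposition of `cfc` of a linear combination of four functions. -/
lemma aux_cfc_comb {H : Type*} [NormedAddCommGroup H] [InnerProductSpace ℂ H]
    [CompleteSpace H] (A : H →L[ℂ] H) (hA : IsSelfAdjoint A) (c₁ c₂ c₃ c₄ : ℝ)
    (p q r s : ℝ → ℝ) (hp : ContinuousOn p (spectrum ℝ A))
    (hq : ContinuousOn q (spectrum ℝ A)) (hr : ContinuousOn r (spectrum ℝ A))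
    (hs : ContinuousOn s (spectrum ℝ A)) (x : H) :
    (⟪(cfc (fun u => c₁ * p u - c₂ * q u - c₃ * r u + c₄ * s u) A) x, x⟫_ℂ).re
      = c₁ * (⟪(cfc p A) x, x⟫_ℂ).re - c₂ * (⟪(cfc q A) x, x⟫_ℂ).re
        - c₃ * (⟪(cfc r A) x, x⟫_ℂ).re + c₄ * (⟪(cfc s A) x, x⟫_ℂ).re := by
  have e : cfc (fun u => c₁ * p u - c₂ * q u - c₃ * r u + c₄ * s u) A
      = c₁ • cfc p A - c₂ • cfc q A - c₃ • cfc r A + c₄ • cfc s A := by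
    rw [cfc_add (a := A) (fun u => c₁ * p u - c₂ * q u - c₃ * r u) (fun u => c₄ * s u)
      (by fun_prop) (by fun_prop)]
    rw [cfc_sub (fun u => c₁ * p u - c₂ * q u) (fun u => c₃ * r u) A
      (by fun_prop) (by fun_prop)]
    rw [cfc_sub (fun u => c₁ * p u) (fun u => c₂ * q u) A (by fun_prop) (by fun_prop)]
    rw [cfc_const_mul c₁ p A hp, cfc_const_mul c₂ q A hq, cfc_const_mul c₃ r A hr,
      cfc_const_mul c₄ s A hs]
  rw [e]
  simp only [ContinuousLinearMap.add_apply, ContinuousLinearMap.sub_apply,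
    ContinuousLinearMap.smul_apply, inner_add_left, inner_sub_left]
  have hsm : ∀ (c : ℝ) (T : H →L[ℂ] H), (⟪(c • T) x, x⟫_ℂ) = (c : ℂ) * ⟪T x, x⟫_ℂ := by
    intro c T
    rw [ContinuousLinearMap.smul_apply]
    have : (c • T x : H) = (c : ℂ) • T x := by
      simp [Complex.coe_smul]
    rw [this, inner_smul_left]
    simp
  simp only [Complex.add_re, Complex.sub_re]
  have h1 := hsm c₁ (cfc p A)
  have h2 := hsm c₂ (cfc q A)
  have h3 := hsm c₃ (cfc r A)
  have h4 := hsm c₄ (cfc s A)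
  simp only [ContinuousLinearMap.smul_apply] at h1 h2 h3 h4
  rw [h1, h2, h3, h4]
  simp [Complex.mul_re]

theorem stmt_6 {H : Type*} [NormedAddCommGroup H] [InnerProductSpace ℂ H] [CompleteSpace H]
    (A : H →L[ℂ] H) (hA : IsSelfAdjoint A) (γ Γ : ℝ) (hγΓ : γ < Γ)
    (hspec : spectrum ℝ A ⊆ Set.Icc γ Γ)
    (h f g : ℝ → ℝ)
    (hh : ContinuousOn h (Set.Icc γ Γ)) (hh0 : ∀ t ∈ Set.Icc γ Γ, 0 ≤ h t)
    (hf : ContinuousOn f (Set.Icc γ Γ)) (hg : ContinuousOn g (Set.Icc γ Γ))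
    (hasync : ∀ s ∈ Set.Icc γ Γ, ∀ t ∈ Set.Icc γ Γ,
      (h t * f s - h s * f t) * (h t * g s - h s * g t) ≤ 0)
    (x : H) (hx : ‖x‖ = 1) :
    (⟪((cfc h A) ^ 2) x, x⟫_ℂ).re * (⟪(cfc f A * cfc g A) x, x⟫_ℂ).re ≤
      (⟪(cfc h A * cfc g A) x, x⟫_ℂ).re * (⟪(cfc h A * cfc f A) x, x⟫_ℂ).re := by
  have hh' : ContinuousOn h (spectrum ℝ A) := hh.mono hspec
  have hf' : ContinuousOn f (spectrum ℝ A) := hf.mono hspec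
  have hg' : ContinuousOn g (spectrum ℝ A) := hg.mono hspec
  -- the four basic quadratic forms
  set r1 := (⟪(cfc (fun s => f s * g s) A) x, x⟫_ℂ).re with hr1
  set r2 := (⟪(cfc (fun s => h s * f s) A) x, x⟫_ℂ).re with hr2
  set r3 := (⟪(cfc (fun s => h s * g s) A) x, x⟫_ℂ).re with hr3
  set r4 := (⟪(cfc (fun s => h s * h s) A) x, x⟫_ℂ).re with hr4
  -- inner step: for each t in the spectrum
  have inner_step : ∀ t ∈ spectrum ℝ A,
      (h t * h t) * r1 - (h t * g t) * r2 - (h t * f t) * r3 + (f t * g t) * r4 ≤ 0 := by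
    intro t ht
    have htK := hspec ht
    have key := aux_cfc_nonpos_inner A hA
      (fun s => (h t * h t) * (f s * g s) - (h t * g t) * (h s * f s)
        - (h t * f t) * (h s * g s) + (f t * g t) * (h s * h s))
      (by
        intro s hs
        have hsK := hspec hs
        have := hasync s hsK t htK
        beta_reduce
        nlinarith [this]) x
    rwa [aux_cfc_comb A hA _ _ _ _ _ _ _ _ (by fun_prop) (by fun_prop) (by fun_prop)
      (by fun_prop) x] at key
  -- outer step
  have outer := aux_cfc_nonpos_inner A hA
    (fun t => r1 * (h t * h t) - r2 * (h t * g t) - r3 * (h t * f t) + r4 * (f t * g t))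
    (by
      intro t ht
      have := inner_step t ht
      beta_reduce
      nlinarith [this]) x
  rw [aux_cfc_comb A hA r1 r2 r3 r4 _ _ _ _ (by fun_prop) (by fun_prop) (by fun_prop)
    (by fun_prop) x] at outer
  -- outer now says: r1*r4 - r2*r3 - r3*r2 + r4*r1 ≤ 0
  have key : r4 * r1 ≤ r3 * r2 := by nlinarith [outer]
  -- rewrite the goal in terms of r1, r2, r3, r4
  have e1 : cfc f A * cfc g A = cfc (fun s => f s * g s) A := (cfc_mul f g A hf' hg').symm
  have e2 : cfc h A * cfc f A = cfc (fun s => h s * f s) A := (cfc_mul h f A hh' hf').symm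
  have e3 : cfc h A * cfc g A = cfc (fun s => h s * g s) A := (cfc_mul h g A hh' hg').symm
  have e4 : (cfc h A) ^ 2 = cfc (fun s => h s * h s) A := by
    rw [sq, ← cfc_mul h h A hh' hh']
  rw [e1, e2, e3, e4]
  exact key
end

section
/- Let A be a selfadjoint bounded operator with spectrum in [γ,Γ], 0 < γ < Γ. If f,g:[γ,Γ]→ℝ are continuous and t-synchronous on [γ,Γ] (i.e. (x f(y) − y f(x))(x g(y) − y g(x)) ≥ 0 for all x,y ∈ [γ,Γ]), then for every unit vector x ∈ H, ⟨A²x,x⟩⟨f(A)g(A)x,x⟩ ≥ ⟨A g(A)x,x⟩⟨A f(A)x,x⟩. -/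
open scoped InnerProductSpace

theorem stmt_9 {H : Type*} [NormedAddCommGroup H] [InnerProductSpace ℂ H] [CompleteSpace H]
    (A : H →L[ℂ] H) (hA : IsSelfAdjoint A) (γ Γ : ℝ) (hγ : 0 < γ) (hγΓ : γ < Γ)
    (hspec : spectrum ℝ A ⊆ Set.Icc γ Γ)
    (f g : ℝ → ℝ)
    (hf : ContinuousOn f (Set.Icc γ Γ)) (hg : ContinuousOn g (Set.Icc γ Γ))
    (hsync : ∀ s ∈ Set.Icc γ Γ, ∀ t ∈ Set.Icc γ Γ,
      0 ≤ (t * f s - s * f t) * (t * g s - s * g t))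
    (x : H) (hx : ‖x‖ = 1) :
    (⟪(A * cfc g A) x, x⟫_ℂ).re * (⟪(A * cfc f A) x, x⟫_ℂ).re ≤
      (⟪(A ^ 2) x, x⟫_ℂ).re * (⟪(cfc f A * cfc g A) x, x⟫_ℂ).re := by
  set σ := spectrum ℝ A with hσ
  have hfσ : ContinuousOn f σ := hf.mono hspec
  have hgσ : ContinuousOn g σ := hg.mono hspec
  have hidσ : ContinuousOn (fun t : ℝ => t) σ := continuousOn_id
  set φ : (ℝ → ℝ) → ℝ := fun h => (⟪(cfc h A) x, x⟫_ℂ).re with hφ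
  -- positivity of φ
  have φ_nonneg : ∀ h : ℝ → ℝ, (∀ t ∈ Set.Icc γ Γ, 0 ≤ h t) → 0 ≤ φ h := by
    intro h hh
    have h1 : (0 : H →L[ℂ] H) ≤ cfc h A :=
      cfc_nonneg fun t ht => hh t (hspec ht)
    have h2 : (cfc h A).IsPositive :=
      (ContinuousLinearMap.nonneg_iff_isPositive _).mp h1
    exact (Complex.nonneg_iff.mp (h2.inner_nonneg_left x)).1
  -- linearity of φ on 4-term combinations
  have φ_lin : ∀ (c1 c2 c3 c4 : ℝ) (h1 h2 h3 h4 : ℝ → ℝ),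
      ContinuousOn h1 σ → ContinuousOn h2 σ → ContinuousOn h3 σ → ContinuousOn h4 σ →
      φ (fun t => c1 * h1 t + c2 * h2 t + c3 * h3 t + c4 * h4 t)
        = c1 * φ h1 + c2 * φ h2 + c3 * φ h3 + c4 * φ h4 := by
    intro c1 c2 c3 c4 h1 h2 h3 h4 hc1 hc2 hc3 hc4
    have m1 : ContinuousOn (fun t => c1 * h1 t) σ := continuousOn_const.mul hc1
    have m2 : ContinuousOn (fun t => c2 * h2 t) σ := continuousOn_const.mul hc2
    have m3 : ContinuousOn (fun t => c3 * h3 t) σ := continuousOn_const.mul hc3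
    have m4 : ContinuousOn (fun t => c4 * h4 t) σ := continuousOn_const.mul hc4
    have key : cfc (fun t => c1 * h1 t + c2 * h2 t + c3 * h3 t + c4 * h4 t) A
        = c1 • cfc h1 A + c2 • cfc h2 A + c3 • cfc h3 A + c4 • cfc h4 A := by
      rw [cfc_add A (fun t => c1 * h1 t + c2 * h2 t + c3 * h3 t) (fun t => c4 * h4 t)
          ((m1.add m2).add m3) m4,
        cfc_add A (fun t => c1 * h1 t + c2 * h2 t) (fun t => c3 * h3 t) (m1.add m2) m3,
        cfc_add A (fun t => c1 * h1 t) (fun t => c2 * h2 t) m1 m2,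
        cfc_const_mul c1 h1 A hc1, cfc_const_mul c2 h2 A hc2,
        cfc_const_mul c3 h3 A hc3, cfc_const_mul c4 h4 A hc4]
    have smul_re : ∀ (c : ℝ) (T : H →L[ℂ] H),
        (⟪(c • T) x, x⟫_ℂ).re = c * (⟪T x, x⟫_ℂ).re := by
      intro c T
      rw [ContinuousLinearMap.smul_apply, RCLike.real_smul_eq_coe_smul (K := ℂ),
        inner_smul_left]
      simp
    simp only [hφ, key, ContinuousLinearMap.add_apply, inner_add_left, Complex.add_re]
    rw [smul_re, smul_re, smul_re, smul_re]
  -- identify the four inner products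
  have hAfg : cfc f A * cfc g A = cfc (fun t => f t * g t) A :=
    (cfc_mul f g A hfσ hgσ).symm
  have hA2 : (A : H →L[ℂ] H) ^ 2 = cfc (fun t : ℝ => t ^ 2) A := by
    rw [show (fun t : ℝ => t ^ 2) = (· ^ 2 : ℝ → ℝ) from rfl, cfc_pow_id A 2]
  have hAg : A * cfc g A = cfc (fun t => t * g t) A := by
    have := cfc_mul (fun t : ℝ => t) g A hidσ hgσ
    rw [cfc_id' ℝ A] at this
    exact this.symm
  have hAf : A * cfc f A = cfc (fun t => t * f t) A := by
    have := cfc_mul (fun t : ℝ => t) f A hidσ hfσ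
    rw [cfc_id' ℝ A] at this
    exact this.symm
  set P := φ (fun t => t ^ 2) with hP
  set Q := φ (fun t => f t * g t) with hQ
  set R := φ (fun t => t * g t) with hR
  set S := φ (fun t => t * f t) with hS
  have goal_eq : (⟪(A * cfc g A) x, x⟫_ℂ).re = R ∧ (⟪(A * cfc f A) x, x⟫_ℂ).re = S ∧
      (⟪(A ^ 2) x, x⟫_ℂ).re = P ∧ (⟪(cfc f A * cfc g A) x, x⟫_ℂ).re = Q := by
    refine ⟨?_, ?_, ?_, ?_⟩ <;> simp only [hAg, hAf, hA2, hAfg, hφ, hP, hQ, hR, hS]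
  -- inner step: for each s in [γ,Γ], the function H(s) is nonneg
  have inner_nonneg : ∀ s ∈ Set.Icc γ Γ,
      0 ≤ (f s * g s) * P + s ^ 2 * Q + (-(s * f s)) * R + (-(s * g s)) * S := by
    intro s hs
    have := φ_lin (f s * g s) (s ^ 2) (-(s * f s)) (-(s * g s))
      (fun t => t ^ 2) (fun t => f t * g t) (fun t => t * g t) (fun t => t * f t)
      (by fun_prop) (hfσ.mul hgσ) (hidσ.mul hgσ) (hidσ.mul hfσ)
    rw [← this]
    have heq : (fun t => (f s * g s) * t ^ 2 + s ^ 2 * (f t * g t)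
        + (-(s * f s)) * (t * g t) + (-(s * g s)) * (t * f t))
        = fun t => (t * f s - s * f t) * (t * g s - s * g t) := by
      funext t; ring
    rw [heq]
    exact φ_nonneg _ fun t ht => hsync s hs t ht
  -- outer step
  have outer : 0 ≤ P * Q + Q * P + (-R) * S + (-S) * R := by
    have := φ_lin P Q (-R) (-S)
      (fun s => f s * g s) (fun s => s ^ 2) (fun s => s * f s) (fun s => s * g s)
      (hfσ.mul hgσ) (by fun_prop) (hidσ.mul hfσ) (hidσ.mul hgσ)
    calc (0 : ℝ) ≤ φ (fun s => P * (f s * g s) + Q * s ^ 2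
            + (-R) * (s * f s) + (-S) * (s * g s)) := by
          refine φ_nonneg _ fun s hs => ?_
          have h := inner_nonneg s hs
          linarith
      _ = P * Q + Q * P + (-R) * S + (-S) * R := this
  obtain ⟨e1, e2, e3, e4⟩ := goal_eq
  rw [e1, e2, e3, e4]
  nlinarith [outer]
end

section
/- Let A, B be selfadjoint bounded operators with spectra contained in [γ,Γ], h:[γ,Γ]→ℝ₊ continuous nonnegative, and f,g:[γ,Γ]→ℝ continuous and h-synchronous. Then for all unit vectors x, y ∈ H: ⟨h(B)²y,y⟩⟨f(A)g(A)x,x⟩ + ⟨h(A)²x,x⟩⟨f(B)g(B)y,y⟩ ≥ ⟨h(B)g(B)y,y⟩⟨h(A)f(A)x,x⟩ + ⟨h(A)g(A)x,x⟩⟨h(B)f(B)y,y⟩. -/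
open scoped InnerProductSpace

set_option maxHeartbeats 1000000

/-- A nonnegative continuous function of a selfadjoint operator has nonnegative
quadratic form. -/
lemma aux_cfc_inner_nonneg {H : Type*} [NormedAddCommGroup H] [InnerProductSpace ℂ H]
    [CompleteSpace H] (T : H →L[ℂ] H) {s : Set ℝ} (hspec : spectrum ℝ T ⊆ s)
    (φ : ℝ → ℝ) (hφ0 : ∀ t ∈ s, 0 ≤ φ t) (z : H) :
    0 ≤ (⟪(cfc φ T) z, z⟫_ℂ).re := by
  have h1 : (0 : H →L[ℂ] H) ≤ cfc φ T := cfc_nonneg fun t ht => hφ0 t (hspec ht)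
  exact (Complex.nonneg_iff.mp
    (((ContinuousLinearMap.nonneg_iff_isPositive _).mp h1).inner_nonneg_left z)).1

lemma aux_cfc_lincomb {H : Type*} [NormedAddCommGroup H] [InnerProductSpace ℂ H]
    [CompleteSpace H] (T : H →L[ℂ] H) (p q u v : ℝ → ℝ) (α β δ ε : ℝ)
    (hp : ContinuousOn p (spectrum ℝ T)) (hq : ContinuousOn q (spectrum ℝ T))
    (hu : ContinuousOn u (spectrum ℝ T)) (hv : ContinuousOn v (spectrum ℝ T)) :
    cfc (fun s => α * p s + β * q s - δ * u s - ε * v s) T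
      = α • cfc p T + β • cfc q T - δ • cfc u T - ε • cfc v T := by
  rw [cfc_sub (R := ℝ) _ _ T (by fun_prop) (by fun_prop),
    cfc_sub (R := ℝ) _ _ T (by fun_prop) (by fun_prop),
    cfc_add (R := ℝ) (a := T) _ _ (by fun_prop) (by fun_prop),
    cfc_const_mul (R := ℝ) _ _ T hp, cfc_const_mul (R := ℝ) _ _ T hq,
    cfc_const_mul (R := ℝ) _ _ T hu, cfc_const_mul (R := ℝ) _ _ T hv]

lemma aux_re_inner_smul {H : Type*} [NormedAddCommGroup H] [InnerProductSpace ℂ H]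
    (r : ℝ) (T : H →L[ℂ] H) (z : H) :
    (⟪(r • T) z, z⟫_ℂ).re = r * (⟪T z, z⟫_ℂ).re := by
  rw [ContinuousLinearMap.smul_apply, RCLike.real_smul_eq_coe_smul (K := ℂ),
    inner_smul_real_left, Complex.real_smul, Complex.mul_re]
  simp

lemma aux_re_inner_comb {H : Type*} [NormedAddCommGroup H] [InnerProductSpace ℂ H]
    (α β δ ε : ℝ) (P Q U V : H →L[ℂ] H) (z : H) :
    (⟪(α • P + β • Q - δ • U - ε • V) z, z⟫_ℂ).re
      = α * (⟪P z, z⟫_ℂ).re + β * (⟪Q z, z⟫_ℂ).re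
        - δ * (⟪U z, z⟫_ℂ).re - ε * (⟪V z, z⟫_ℂ).re := by
  simp only [ContinuousLinearMap.sub_apply, ContinuousLinearMap.add_apply,
    inner_sub_left, inner_add_left, Complex.sub_re, Complex.add_re]
  rw [aux_re_inner_smul, aux_re_inner_smul, aux_re_inner_smul, aux_re_inner_smul]

theorem stmt_11 {H : Type*} [NormedAddCommGroup H] [InnerProductSpace ℂ H] [CompleteSpace H]
    (A B : H →L[ℂ] H) (hA : IsSelfAdjoint A) (hB : IsSelfAdjoint B) (γ Γ : ℝ) (hγΓ : γ < Γ)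
    (hspecA : spectrum ℝ A ⊆ Set.Icc γ Γ) (hspecB : spectrum ℝ B ⊆ Set.Icc γ Γ)
    (h f g : ℝ → ℝ)
    (hh : ContinuousOn h (Set.Icc γ Γ)) (hh0 : ∀ t ∈ Set.Icc γ Γ, 0 ≤ h t)
    (hf : ContinuousOn f (Set.Icc γ Γ)) (hg : ContinuousOn g (Set.Icc γ Γ))
    (hsync : ∀ s ∈ Set.Icc γ Γ, ∀ t ∈ Set.Icc γ Γ,
      0 ≤ (h t * f s - h s * f t) * (h t * g s - h s * g t))
    (x y : H) (hx : ‖x‖ = 1) (hy : ‖y‖ = 1) :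
    (⟪(cfc h B * cfc g B) y, y⟫_ℂ).re * (⟪(cfc h A * cfc f A) x, x⟫_ℂ).re +
        (⟪(cfc h A * cfc g A) x, x⟫_ℂ).re * (⟪(cfc h B * cfc f B) y, y⟫_ℂ).re ≤
      (⟪((cfc h B) ^ 2) y, y⟫_ℂ).re * (⟪(cfc f A * cfc g A) x, x⟫_ℂ).re +
        (⟪((cfc h A) ^ 2) x, x⟫_ℂ).re * (⟪(cfc f B * cfc g B) y, y⟫_ℂ).re := by
  have hhA : ContinuousOn h (spectrum ℝ A) := hh.mono hspecA
  have hfA : ContinuousOn f (spectrum ℝ A) := hf.mono hspecA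
  have hgA : ContinuousOn g (spectrum ℝ A) := hg.mono hspecA
  have hhB : ContinuousOn h (spectrum ℝ B) := hh.mono hspecB
  have hfB : ContinuousOn f (spectrum ℝ B) := hf.mono hspecB
  have hgB : ContinuousOn g (spectrum ℝ B) := hg.mono hspecB
  set a : ℝ := (⟪(cfc (fun s => f s * g s) A) x, x⟫_ℂ).re with ha_def
  set b : ℝ := (⟪(cfc (fun s => h s * h s) A) x, x⟫_ℂ).re with hb_def
  set c : ℝ := (⟪(cfc (fun s => h s * f s) A) x, x⟫_ℂ).re with hc_def
  set d : ℝ := (⟪(cfc (fun s => h s * g s) A) x, x⟫_ℂ).re with hd_def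
  -- Step 1: pointwise inequality for the A-quantities
  have step1 : ∀ t ∈ Set.Icc γ Γ,
      0 ≤ a * (h t * h t) + b * (f t * g t) - c * (h t * g t) - d * (h t * f t) := by
    intro t ht
    have hpos := aux_cfc_inner_nonneg A hspecA
      (fun s => (h t * h t) * (f s * g s) + (f t * g t) * (h s * h s)
        - (h t * g t) * (h s * f s) - (h t * f t) * (h s * g s))
      (fun s hs => by
        have h1 := hsync s hs t ht
        have h2 : (h t * f s - h s * f t) * (h t * g s - h s * g t)
            = (h t * h t) * (f s * g s) + (f t * g t) * (h s * h s)
              - (h t * g t) * (h s * f s) - (h t * f t) * (h s * g s) := by ring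
        exact h1.trans_eq h2) x
    rw [aux_cfc_lincomb A _ _ _ _ _ _ _ _ (by fun_prop) (by fun_prop) (by fun_prop)
      (by fun_prop), aux_re_inner_comb] at hpos
    rw [← ha_def, ← hb_def, ← hc_def, ← hd_def] at hpos
    linarith [hpos]
  -- Step 2: apply functional calculus at B
  have step2 := aux_cfc_inner_nonneg B hspecB
    (fun t => a * (h t * h t) + b * (f t * g t) - c * (h t * g t) - d * (h t * f t)) step1 y
  rw [aux_cfc_lincomb B _ _ _ _ _ _ _ _ (by fun_prop) (by fun_prop) (by fun_prop)
    (by fun_prop), aux_re_inner_comb] at step2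
  -- rewrite the goal's operator products as single cfc's
  have eA1 : cfc h A * cfc f A = cfc (fun s => h s * f s) A := (cfc_mul _ _ A hhA hfA).symm
  have eA2 : cfc h A * cfc g A = cfc (fun s => h s * g s) A := (cfc_mul _ _ A hhA hgA).symm
  have eA3 : cfc f A * cfc g A = cfc (fun s => f s * g s) A := (cfc_mul _ _ A hfA hgA).symm
  have eA4 : (cfc h A) ^ 2 = cfc (fun s => h s * h s) A := by
    rw [sq]; exact (cfc_mul _ _ A hhA hhA).symm
  have eB1 : cfc h B * cfc f B = cfc (fun s => h s * f s) B := (cfc_mul _ _ B hhB hfB).symm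
  have eB2 : cfc h B * cfc g B = cfc (fun s => h s * g s) B := (cfc_mul _ _ B hhB hgB).symm
  have eB3 : cfc f B * cfc g B = cfc (fun s => f s * g s) B := (cfc_mul _ _ B hfB hgB).symm
  have eB4 : (cfc h B) ^ 2 = cfc (fun s => h s * h s) B := by
    rw [sq]; exact (cfc_mul _ _ B hhB hhB).symm
  rw [eA1, eA2, eA3, eA4, eB1, eB2, eB3, eB4]
  rw [← ha_def, ← hb_def, ← hc_def, ← hd_def]
  linarith [step2]
end

section
/- Let A, B be selfadjoint operators with spectra in [γ,Γ] ⊂ (0,∞) and p, q, r real numbers with p, q > r > 0. Then for all unit vectors x, y ∈ H: ⟨B^{2r}y,y⟩⟨A^{p+q}x,x⟩ + ⟨A^{2r}x,x⟩⟨B^{p+q}y,y⟩ ≥ ⟨B^{q+r}y,y⟩⟨A^{p+r}x,x⟩ + ⟨A^{q+r}x,x⟩⟨B^{p+r}y,y⟩. -/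
open scoped InnerProductSpace

/-- Pointwise Chebyshev-type inequality for powers. -/
private lemma pt_ineq {s t p q r : ℝ} (hs : 0 < s) (ht : 0 < t)
    (hpr : r < p) (hqr : r < q) (hr : 0 < r) :
    0 ≤ s ^ (2*r) * t ^ (p+q) + s ^ (p+q) * t ^ (2*r)
        - s ^ (q+r) * t ^ (p+r) - s ^ (p+r) * t ^ (q+r) := by
  have tp := Real.rpow_add ht r (p - r); rw [show r + (p - r) = p by ring] at tp
  have tq := Real.rpow_add ht r (q - r); rw [show r + (q - r) = q by ring] at tq
  have sp := Real.rpow_add hs r (p - r); rw [show r + (p - r) = p by ring] at sp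
  have sq := Real.rpow_add hs r (q - r); rw [show r + (q - r) = q by ring] at sq
  have t2 := Real.rpow_add ht r r; rw [show r + r = 2 * r by ring] at t2
  have s2 := Real.rpow_add hs r r; rw [show r + r = 2 * r by ring] at s2
  have tpq := Real.rpow_add ht p q
  have spq := Real.rpow_add hs p q
  have tpr := Real.rpow_add ht p r
  have spr := Real.rpow_add hs p r
  have tqr := Real.rpow_add ht q r
  have sqr := Real.rpow_add hs q r
  have ha : 0 < t ^ r := Real.rpow_pos_of_pos ht r
  have hb : 0 < s ^ r := Real.rpow_pos_of_pos hs r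
  have hsign : 0 ≤ (t ^ (p - r) - s ^ (p - r)) * (t ^ (q - r) - s ^ (q - r)) := by
    rcases le_total s t with h | h
    · exact mul_nonneg (sub_nonneg.mpr (Real.rpow_le_rpow hs.le h (by linarith)))
        (sub_nonneg.mpr (Real.rpow_le_rpow hs.le h (by linarith)))
    · have h1 := Real.rpow_le_rpow ht.le h (show (0:ℝ) ≤ p - r by linarith)
      have h2 := Real.rpow_le_rpow ht.le h (show (0:ℝ) ≤ q - r by linarith)
      nlinarith
  rw [tpq, spq, tpr, spr, tqr, sqr, t2, s2, tp, tq, sp, sq]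
  nlinarith [mul_nonneg (mul_pos (mul_pos ha ha) (mul_pos hb hb)).le hsign]

private lemma re_inner_smul {H : Type*} [NormedAddCommGroup H] [InnerProductSpace ℂ H]
    (c : ℝ) (T : H →L[ℂ] H) (x : H) :
    (⟪(c • T) x, x⟫_ℂ).re = c * (⟪T x, x⟫_ℂ).re := by
  rw [ContinuousLinearMap.smul_apply, ← Complex.coe_smul, inner_smul_left,
    Complex.conj_ofReal]
  simp [Complex.mul_re]

/-- Positivity of a linear combination of `re⟪cfc (·^e) A x, x⟫` coming from pointwise
positivity on the spectrum. -/
private lemma key_comb {H : Type*} [NormedAddCommGroup H] [InnerProductSpace ℂ H]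
    [CompleteSpace H] (A : H →L[ℂ] H) (hA : IsSelfAdjoint A)
    (hpos : ∀ t ∈ spectrum ℝ A, 0 < t)
    (c1 c2 c3 c4 e1 e2 e3 e4 : ℝ) (x : H)
    (h : ∀ t ∈ spectrum ℝ A,
      0 ≤ c1 * t ^ e1 + c2 * t ^ e2 - c3 * t ^ e3 - c4 * t ^ e4) :
    0 ≤ c1 * (⟪(cfc (fun t : ℝ => t ^ e1) A) x, x⟫_ℂ).re
        + c2 * (⟪(cfc (fun t : ℝ => t ^ e2) A) x, x⟫_ℂ).re
        - c3 * (⟪(cfc (fun t : ℝ => t ^ e3) A) x, x⟫_ℂ).re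
        - c4 * (⟪(cfc (fun t : ℝ => t ^ e4) A) x, x⟫_ℂ).re := by
  have hc : ∀ e : ℝ, ContinuousOn (fun t : ℝ => t ^ e) (spectrum ℝ A) := fun e t ht =>
    (Real.continuousAt_rpow_const t e (Or.inl (hpos t ht).ne')).continuousWithinAt
  have hcm : ∀ c e : ℝ, ContinuousOn (fun t : ℝ => c * t ^ e) (spectrum ℝ A) := fun c e =>
    continuousOn_const.mul (hc e)
  have heq : cfc (fun t : ℝ => c1 * t ^ e1 + c2 * t ^ e2 - c3 * t ^ e3 - c4 * t ^ e4) A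
      = c1 • cfc (fun t : ℝ => t ^ e1) A + c2 • cfc (fun t : ℝ => t ^ e2) A
        - c3 • cfc (fun t : ℝ => t ^ e3) A - c4 • cfc (fun t : ℝ => t ^ e4) A := by
    rw [cfc_sub (fun t : ℝ => c1 * t ^ e1 + c2 * t ^ e2 - c3 * t ^ e3) (fun t : ℝ => c4 * t ^ e4) A (((hcm c1 e1).add (hcm c2 e2)).sub (hcm c3 e3)) (hcm c4 e4),
      cfc_sub (fun t : ℝ => c1 * t ^ e1 + c2 * t ^ e2) (fun t : ℝ => c3 * t ^ e3) A ((hcm c1 e1).add (hcm c2 e2)) (hcm c3 e3),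
      cfc_add A _ _ (hcm c1 e1) (hcm c2 e2),
      cfc_const_mul c1 _ A (hc e1), cfc_const_mul c2 _ A (hc e2),
      cfc_const_mul c3 _ A (hc e3), cfc_const_mul c4 _ A (hc e4)]
  have h0 : (0 : H →L[ℂ] H) ≤ cfc
      (fun t : ℝ => c1 * t ^ e1 + c2 * t ^ e2 - c3 * t ^ e3 - c4 * t ^ e4) A :=
    cfc_nonneg h
  rw [heq] at h0
  have h1 := ((ContinuousLinearMap.nonneg_iff_isPositive _).mp h0).re_inner_nonneg_left x
  simp only [ContinuousLinearMap.sub_apply, ContinuousLinearMap.add_apply,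
    inner_sub_left, inner_add_left, RCLike.re_to_complex, Complex.sub_re,
    Complex.add_re, re_inner_smul] at h1
  linarith

theorem stmt_12 {H : Type*} [NormedAddCommGroup H] [InnerProductSpace ℂ H] [CompleteSpace H]
    (A B : H →L[ℂ] H) (hA : IsSelfAdjoint A) (hB : IsSelfAdjoint B) (γ Γ : ℝ)
    (hγ : 0 < γ) (hγΓ : γ < Γ)
    (hspecA : spectrum ℝ A ⊆ Set.Icc γ Γ) (hspecB : spectrum ℝ B ⊆ Set.Icc γ Γ)
    (p q r : ℝ) (hpr : r < p) (hqr : r < q) (hr : 0 < r)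
    (x y : H) (hx : ‖x‖ = 1) (hy : ‖y‖ = 1) :
    (⟪(cfc (fun t : ℝ => t ^ (q + r)) B) y, y⟫_ℂ).re *
          (⟪(cfc (fun t : ℝ => t ^ (p + r)) A) x, x⟫_ℂ).re +
        (⟪(cfc (fun t : ℝ => t ^ (q + r)) A) x, x⟫_ℂ).re *
          (⟪(cfc (fun t : ℝ => t ^ (p + r)) B) y, y⟫_ℂ).re ≤
      (⟪(cfc (fun t : ℝ => t ^ (2 * r)) B) y, y⟫_ℂ).re *
          (⟪(cfc (fun t : ℝ => t ^ (p + q)) A) x, x⟫_ℂ).re +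
        (⟪(cfc (fun t : ℝ => t ^ (2 * r)) A) x, x⟫_ℂ).re *
          (⟪(cfc (fun t : ℝ => t ^ (p + q)) B) y, y⟫_ℂ).re := by
  have hposA : ∀ t ∈ spectrum ℝ A, 0 < t := fun t ht => lt_of_lt_of_le hγ (hspecA ht).1
  have hposB : ∀ s ∈ spectrum ℝ B, 0 < s := fun s hs => lt_of_lt_of_le hγ (hspecB hs).1
  set aPQ := (⟪(cfc (fun t : ℝ => t ^ (p + q)) A) x, x⟫_ℂ).re with haPQ
  set a2R := (⟪(cfc (fun t : ℝ => t ^ (2 * r)) A) x, x⟫_ℂ).re with ha2R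
  set aPR := (⟪(cfc (fun t : ℝ => t ^ (p + r)) A) x, x⟫_ℂ).re with haPR
  set aQR := (⟪(cfc (fun t : ℝ => t ^ (q + r)) A) x, x⟫_ℂ).re with haQR
  have hGB : ∀ s ∈ spectrum ℝ B,
      0 ≤ aPQ * s ^ (2 * r) + a2R * s ^ (p + q) - aPR * s ^ (q + r) - aQR * s ^ (p + r) := by
    intro s hs
    have hs0 : 0 < s := hposB s hs
    have h := key_comb A hA hposA (s ^ (2*r)) (s ^ (p+q)) (s ^ (q+r)) (s ^ (p+r))
      (p+q) (2*r) (p+r) (q+r) x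
      (fun t ht => pt_ineq hs0 (hposA t ht) hpr hqr hr)
    linarith
  have hfin := key_comb B hB hposB aPQ a2R aPR aQR (2*r) (p+q) (q+r) (p+r) y hGB
  linarith
end

section
/- Let A, B be selfadjoint operators with spectra in [γ,Γ] and r ∈ ℝ (with γ > 0 if r requires positivity). Then for all unit vectors x, y ∈ H: ⟨B^{2r}y,y⟩⟨exp(2A)x,x⟩ + ⟨A^{2r}x,x⟩⟨exp(2B)y,y⟩ ≥ 2⟨A^r exp(A)x,x⟩⟨B^r exp(B)y,y⟩. -/
open scoped InnerProductSpace

lemma aux_13 {H : Type*} [NormedAddCommGroup H] [InnerProductSpace ℂ H] [CompleteSpace H]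
    (A : H →L[ℂ] H) (hA : IsSelfAdjoint A) (hpos : ∀ t ∈ spectrum ℝ A, 0 < t)
    (r : ℝ) (x : H) :
    ∃ u v : H,
      (⟪(cfc (fun t : ℝ => t ^ r * Real.exp t) A) x, x⟫_ℂ).re ≤ ‖u‖ * ‖v‖ ∧
      0 ≤ (⟪(cfc (fun t : ℝ => t ^ r * Real.exp t) A) x, x⟫_ℂ).re ∧
      (⟪(cfc (fun t : ℝ => t ^ (2 * r)) A) x, x⟫_ℂ).re = ‖u‖ ^ 2 ∧
      (⟪(cfc (fun t : ℝ => Real.exp (2 * t)) A) x, x⟫_ℂ).re = ‖v‖ ^ 2 := by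
  have hcr : ContinuousOn (fun t : ℝ => t ^ r) (spectrum ℝ A) := fun t ht =>
    (Real.continuousAt_rpow_const t r (Or.inl (hpos t ht).ne')).continuousWithinAt
  have hce : ContinuousOn Real.exp (spectrum ℝ A) := Real.continuous_exp.continuousOn
  set p := cfc (fun t : ℝ => t ^ r) A with hp
  set e := cfc Real.exp A with he
  have hpA : IsSelfAdjoint p := cfc_predicate _ A
  have heA : IsSelfAdjoint e := cfc_predicate _ A
  have hsymp := ContinuousLinearMap.isSelfAdjoint_iff_isSymmetric.mp hpA
  have hmul : cfc (fun t : ℝ => t ^ r * Real.exp t) A = p * e := cfc_mul _ _ A hcr hce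
  have h2r : cfc (fun t : ℝ => t ^ (2 * r)) A = p * p := by
    rw [hp, ← cfc_mul _ _ A hcr hcr]
    exact cfc_congr fun t ht => by
      rw [two_mul, Real.rpow_add (hpos t ht)]
  have hexp2 : cfc (fun t : ℝ => Real.exp (2 * t)) A = e * e := by
    rw [he, ← cfc_mul _ _ A hce hce]
    exact cfc_congr fun t ht => by rw [two_mul, Real.exp_add]
  have hnn : 0 ≤ cfc (fun t : ℝ => t ^ r * Real.exp t) A :=
    cfc_nonneg fun t ht =>
      mul_nonneg (Real.rpow_nonneg (hpos t ht).le r) (Real.exp_pos t).le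
  refine ⟨p x, e x, ?_, ?_, ?_, ?_⟩
  · rw [hmul, ContinuousLinearMap.mul_apply,
      show (⟪p (e x), x⟫_ℂ) = ⟪e x, p x⟫_ℂ from hsymp (e x) x]
    calc (⟪e x, p x⟫_ℂ).re ≤ ‖e x‖ * ‖p x‖ :=
        show RCLike.re ⟪e x, p x⟫_ℂ ≤ ‖e x‖ * ‖p x‖ from re_inner_le_norm _ _
      _ = ‖p x‖ * ‖e x‖ := mul_comm _ _
  · exact (Complex.nonneg_iff.mp (((ContinuousLinearMap.nonneg_iff_isPositive _).mp hnn).inner_nonneg_left x)).1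
  · rw [h2r, ContinuousLinearMap.mul_apply,
      show (⟪p (p x), x⟫_ℂ) = ⟪p x, p x⟫_ℂ from hsymp (p x) x]
    exact inner_self_eq_norm_sq (𝕜 := ℂ) (p x)
  · rw [hexp2, ContinuousLinearMap.mul_apply,
      show (⟪e (e x), x⟫_ℂ) = ⟪e x, e x⟫_ℂ from
        (ContinuousLinearMap.isSelfAdjoint_iff_isSymmetric.mp heA) (e x) x]
    exact inner_self_eq_norm_sq (𝕜 := ℂ) (e x)

theorem stmt_13 {H : Type*} [NormedAddCommGroup H] [InnerProductSpace ℂ H] [CompleteSpace H]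
    (A B : H →L[ℂ] H) (hA : IsSelfAdjoint A) (hB : IsSelfAdjoint B) (γ Γ : ℝ)
    (hγ : 0 < γ) (hγΓ : γ < Γ)
    (hspecA : spectrum ℝ A ⊆ Set.Icc γ Γ) (hspecB : spectrum ℝ B ⊆ Set.Icc γ Γ)
    (r : ℝ) (x y : H) (hx : ‖x‖ = 1) (hy : ‖y‖ = 1) :
    2 * ((⟪(cfc (fun t : ℝ => t ^ r * Real.exp t) A) x, x⟫_ℂ).re *
          (⟪(cfc (fun t : ℝ => t ^ r * Real.exp t) B) y, y⟫_ℂ).re) ≤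
      (⟪(cfc (fun t : ℝ => t ^ (2 * r)) B) y, y⟫_ℂ).re *
          (⟪(cfc (fun t : ℝ => Real.exp (2 * t)) A) x, x⟫_ℂ).re +
        (⟪(cfc (fun t : ℝ => t ^ (2 * r)) A) x, x⟫_ℂ).re *
          (⟪(cfc (fun t : ℝ => Real.exp (2 * t)) B) y, y⟫_ℂ).re := by
  obtain ⟨u, v, hle, hnn, h1, h2⟩ :=
    aux_13 A hA (fun t ht => hγ.trans_le (hspecA ht).1) r x
  obtain ⟨u', v', hle', hnn', h1', h2'⟩ :=
    aux_13 B hB (fun t ht => hγ.trans_le (hspecB ht).1) r y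
  rw [h1, h2, h1', h2']
  nlinarith [sq_nonneg (‖u'‖ * ‖v‖ - ‖u‖ * ‖v'‖), norm_nonneg u, norm_nonneg v,
    norm_nonneg u', norm_nonneg v', mul_nonneg (norm_nonneg u) (norm_nonneg v),
    mul_nonneg (norm_nonneg u') (norm_nonneg v'),
    mul_le_mul hle hle' hnn' (mul_nonneg (norm_nonneg u) (norm_nonneg v))]
end

section
/- Let A be selfadjoint with spectrum in [γ,Γ], h:[γ,Γ]→ℝ₊ continuous nonnegative, and f,g:[γ,Γ]→ℝ continuous and h-synchronous. Then for every unit vector x ∈ H: h(⟨Ax,x⟩)²⟨f(A)g(A)x,x⟩ − ⟨h(A)f(A)x,x⟩⟨h(A)g(A)x,x⟩ ≥ [h(⟨Ax,x⟩)⟨h(A)f(A)x,x⟩ − ⟨h(A)²x,x⟩ f(⟨Ax,x⟩)]·g(⟨Ax,x⟩) + [h(⟨Ax,x⟩) f(⟨Ax,x⟩) − ⟨h(A)f(A)x,x⟩]·⟨h(A)g(A)x,x⟩. -/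
open scoped InnerProductSpace

set_option maxHeartbeats 1000000 in
theorem stmt_14 {H : Type*} [NormedAddCommGroup H] [InnerProductSpace ℂ H] [CompleteSpace H]
    (A : H →L[ℂ] H) (hA : IsSelfAdjoint A) (γ Γ : ℝ) (hγΓ : γ < Γ)
    (hspec : spectrum ℝ A ⊆ Set.Icc γ Γ)
    (h f g : ℝ → ℝ)
    (hh : ContinuousOn h (Set.Icc γ Γ)) (hh0 : ∀ t ∈ Set.Icc γ Γ, 0 ≤ h t)
    (hf : ContinuousOn f (Set.Icc γ Γ)) (hg : ContinuousOn g (Set.Icc γ Γ))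
    (hsync : ∀ s ∈ Set.Icc γ Γ, ∀ t ∈ Set.Icc γ Γ,
      0 ≤ (h t * f s - h s * f t) * (h t * g s - h s * g t))
    (x : H) (hx : ‖x‖ = 1) :
    (h ((⟪A x, x⟫_ℂ).re) * (⟪(cfc h A * cfc f A) x, x⟫_ℂ).re -
          (⟪((cfc h A) ^ 2) x, x⟫_ℂ).re * f ((⟪A x, x⟫_ℂ).re)) * g ((⟪A x, x⟫_ℂ).re) +
        (h ((⟪A x, x⟫_ℂ).re) * f ((⟪A x, x⟫_ℂ).re) -
          (⟪(cfc h A * cfc f A) x, x⟫_ℂ).re) * (⟪(cfc h A * cfc g A) x, x⟫_ℂ).re ≤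
      h ((⟪A x, x⟫_ℂ).re) ^ 2 * (⟪(cfc f A * cfc g A) x, x⟫_ℂ).re -
        (⟪(cfc h A * cfc f A) x, x⟫_ℂ).re * (⟪(cfc h A * cfc g A) x, x⟫_ℂ).re := by
  have key : ∀ φ : ℝ → ℝ, (∀ t ∈ spectrum ℝ A, 0 ≤ φ t) → 0 ≤ (⟪cfc φ A x, x⟫_ℂ).re := by
    intro φ hφ
    have h1 : (0 : H →L[ℂ] H) ≤ cfc φ A := cfc_nonneg hφ
    exact ((ContinuousLinearMap.nonneg_iff_isPositive _).mp h1).2 x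
  have hsub : spectrum ℝ A ⊆ Set.Icc γ Γ := hspec
  set s : ℝ := (⟪A x, x⟫_ℂ).re with hs_def
  have hxx : (⟪x, x⟫_ℂ).re = 1 := by
    rw [← RCLike.re_to_complex, inner_self_eq_norm_sq, hx]; norm_num
  have hcid : cfc (fun t : ℝ => t) A = A := cfc_id' ℝ A hA
  have hsm : ∀ r : ℝ, (⟪r • x, x⟫_ℂ).re = r := by
    intro r
    rw [RCLike.real_smul_eq_coe_smul (K := ℂ), inner_smul_left]
    simp [Complex.mul_re, Complex.conj_ofReal, hxx, hx]
  have rsm : ∀ (r : ℝ) (T : H →L[ℂ] H), (⟪(r • T) x, x⟫_ℂ).re = r * (⟪T x, x⟫_ℂ).re := by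
    intro r T
    rw [ContinuousLinearMap.smul_apply, RCLike.real_smul_eq_coe_smul (K := ℂ), inner_smul_left]
    simp [Complex.mul_re, Complex.conj_ofReal]
  have hsγ : γ ≤ s := by
    have h0 := key (fun t => t - γ) (fun t ht => by simpa using (hsub ht).1)
    have he : cfc (fun t : ℝ => t - γ) A = A - algebraMap ℝ _ γ := by
      rw [cfc_sub (fun t : ℝ => t) (fun _ => γ) A, hcid, cfc_const γ A hA]
    rw [he] at h0
    have h2 : (⟪(A - algebraMap ℝ (H →L[ℂ] H) γ) x, x⟫_ℂ).re = s - γ := by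
      rw [Algebra.algebraMap_eq_smul_one]
      simp [ContinuousLinearMap.sub_apply, inner_sub_left, Complex.sub_re, hsm, hx, hs_def]
    linarith [h2 ▸ h0]
  have hsΓ : s ≤ Γ := by
    have h0 := key (fun t => Γ - t) (fun t ht => by simpa using (hsub ht).2)
    have he : cfc (fun t : ℝ => Γ - t) A = algebraMap ℝ _ Γ - A := by
      rw [cfc_sub (fun _ => Γ) (fun t : ℝ => t) A, hcid, cfc_const Γ A hA]
    rw [he] at h0
    have h2 : (⟪(algebraMap ℝ (H →L[ℂ] H) Γ - A) x, x⟫_ℂ).re = Γ - s := by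
      rw [Algebra.algebraMap_eq_smul_one]
      simp [ContinuousLinearMap.sub_apply, inner_sub_left, Complex.sub_re, hsm, hx, hs_def]
    linarith [h2 ▸ h0]
  have hsmem : s ∈ Set.Icc γ Γ := ⟨hsγ, hsΓ⟩
  have hh' : ContinuousOn h (spectrum ℝ A) := hh.mono hsub
  have hf' : ContinuousOn f (spectrum ℝ A) := hf.mono hsub
  have hg' : ContinuousOn g (spectrum ℝ A) := hg.mono hsub
  set φ : ℝ → ℝ := fun t =>
    (h s * h s) * (f t * g t) - (h s * g s) * (h t * f t)
      - (f s * h s) * (h t * g t) + (f s * g s) * (h t * h t) with hφdef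
  have hφ0 : ∀ t ∈ spectrum ℝ A, 0 ≤ φ t := by
    intro t ht
    have h1 := hsync s hsmem t (hsub ht)
    simp only [hφdef]
    nlinarith [h1]
  have hpos := key φ hφ0
  have hfg : ContinuousOn (fun t => f t * g t) (spectrum ℝ A) := hf'.mul hg'
  have hhf : ContinuousOn (fun t => h t * f t) (spectrum ℝ A) := hh'.mul hf'
  have hhg : ContinuousOn (fun t => h t * g t) (spectrum ℝ A) := hh'.mul hg'
  have hhh : ContinuousOn (fun t => h t * h t) (spectrum ℝ A) := hh'.mul hh'
  have k1 : ContinuousOn (fun t => (h s * h s) * (f t * g t)) (spectrum ℝ A) :=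
    continuousOn_const.mul hfg
  have k2 : ContinuousOn (fun t => (h s * g s) * (h t * f t)) (spectrum ℝ A) :=
    continuousOn_const.mul hhf
  have k3 : ContinuousOn (fun t => (f s * h s) * (h t * g t)) (spectrum ℝ A) :=
    continuousOn_const.mul hhg
  have k4 : ContinuousOn (fun t => (f s * g s) * (h t * h t)) (spectrum ℝ A) :=
    continuousOn_const.mul hhh
  have hφeq : cfc φ A =
      (h s * h s) • (cfc f A * cfc g A) - (h s * g s) • (cfc h A * cfc f A)
        - (f s * h s) • (cfc h A * cfc g A) + (f s * g s) • (cfc h A * cfc h A) := by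
    rw [hφdef]
    rw [cfc_add A (fun t => h s * h s * (f t * g t) - h s * g s * (h t * f t) - f s * h s * (h t * g t))
        (fun t => f s * g s * (h t * h t)) ((k1.sub k2).sub k3) k4,
      cfc_sub (fun t => h s * h s * (f t * g t) - h s * g s * (h t * f t))
        (fun t => f s * h s * (h t * g t)) A (k1.sub k2) k3,
      cfc_sub (fun t => h s * h s * (f t * g t)) (fun t => h s * g s * (h t * f t)) A k1 k2,
      cfc_const_mul _ _ A hfg, cfc_const_mul _ _ A hhf,
      cfc_const_mul _ _ A hhg, cfc_const_mul _ _ A hhh,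
      cfc_mul f g A hf' hg', cfc_mul h f A hh' hf',
      cfc_mul h g A hh' hg', cfc_mul h h A hh' hh']
  have reExpand : (⟪cfc φ A x, x⟫_ℂ).re =
      (h s * h s) * (⟪(cfc f A * cfc g A) x, x⟫_ℂ).re
        - (h s * g s) * (⟪(cfc h A * cfc f A) x, x⟫_ℂ).re
        - (f s * h s) * (⟪(cfc h A * cfc g A) x, x⟫_ℂ).re
        + (f s * g s) * (⟪(cfc h A * cfc h A) x, x⟫_ℂ).re := by
    rw [hφeq]
    simp only [ContinuousLinearMap.add_apply, ContinuousLinearMap.sub_apply,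
      inner_add_left, inner_sub_left, Complex.add_re, Complex.sub_re, rsm]
  have hsq : ((cfc h A) ^ 2 : H →L[ℂ] H) = cfc h A * cfc h A := pow_two _
  rw [hsq]
  have hdiff :
      (h s ^ 2 * (⟪(cfc f A * cfc g A) x, x⟫_ℂ).re -
          (⟪(cfc h A * cfc f A) x, x⟫_ℂ).re * (⟪(cfc h A * cfc g A) x, x⟫_ℂ).re)
        - ((h s * (⟪(cfc h A * cfc f A) x, x⟫_ℂ).re -
            (⟪(cfc h A * cfc h A) x, x⟫_ℂ).re * f s) * g s +
          (h s * f s - (⟪(cfc h A * cfc f A) x, x⟫_ℂ).re) *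
            (⟪(cfc h A * cfc g A) x, x⟫_ℂ).re)
        = (⟪cfc φ A x, x⟫_ℂ).re := by
    rw [reExpand]; ring
  linarith [hpos, hdiff]
end

section
/- Let A₁,…,Aₙ be selfadjoint bounded operators with spectra in [γ,Γ], h:[γ,Γ]→ℝ₊ continuous nonnegative, and f,g:[γ,Γ]→ℝ continuous and h-synchronous. Then for vectors x₁,…,xₙ ∈ H with Σⱼ‖xⱼ‖² = 1: (Σⱼ⟨h(Aⱼ)²xⱼ,xⱼ⟩)(Σⱼ⟨f(Aⱼ)g(Aⱼ)xⱼ,xⱼ⟩) ≥ (Σⱼ⟨h(Aⱼ)g(Aⱼ)xⱼ,xⱼ⟩)(Σⱼ⟨h(Aⱼ)f(Aⱼ)xⱼ,xⱼ⟩). -/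
open scoped InnerProductSpace

theorem stmt_17 {H : Type*} [NormedAddCommGroup H] [InnerProductSpace ℂ H] [CompleteSpace H]
    (n : ℕ) (A : Fin n → (H →L[ℂ] H)) (hA : ∀ j, IsSelfAdjoint (A j))
    (γ Γ : ℝ) (hγΓ : γ < Γ) (hspec : ∀ j, spectrum ℝ (A j) ⊆ Set.Icc γ Γ)
    (h f g : ℝ → ℝ)
    (hh : ContinuousOn h (Set.Icc γ Γ)) (hh0 : ∀ t ∈ Set.Icc γ Γ, 0 ≤ h t)
    (hf : ContinuousOn f (Set.Icc γ Γ)) (hg : ContinuousOn g (Set.Icc γ Γ))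
    (hsync : ∀ s ∈ Set.Icc γ Γ, ∀ t ∈ Set.Icc γ Γ,
      0 ≤ (h t * f s - h s * f t) * (h t * g s - h s * g t))
    (x : Fin n → H) (hx : ∑ j, ‖x j‖ ^ 2 = 1) :
    (∑ j, (⟪(cfc h (A j) * cfc g (A j)) (x j), x j⟫_ℂ).re) *
        (∑ j, (⟪(cfc h (A j) * cfc f (A j)) (x j), x j⟫_ℂ).re) ≤
      (∑ j, (⟪((cfc h (A j)) ^ 2) (x j), x j⟫_ℂ).re) *
        (∑ j, (⟪(cfc f (A j) * cfc g (A j)) (x j), x j⟫_ℂ).re) := by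
  classical
  -- the positive linear functional(s)
  let P : Fin n → (ℝ → ℝ) → ℝ := fun j φ => (⟪(cfc φ (A j)) (x j), x j⟫_ℂ).re
  -- continuity transfer
  have hco : ∀ j (φ : ℝ → ℝ), ContinuousOn φ (Set.Icc γ Γ) →
      ContinuousOn φ (spectrum ℝ (A j)) := fun j φ hφ => hφ.mono (hspec j)
  -- positivity
  have Ppos : ∀ j (φ : ℝ → ℝ), (∀ t ∈ Set.Icc γ Γ, 0 ≤ φ t) → 0 ≤ P j φ := by
    intro j φ hφ
    have h1 : (0 : H →L[ℂ] H) ≤ cfc φ (A j) :=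
      cfc_nonneg fun t ht => hφ t (hspec j ht)
    have h2 := ((ContinuousLinearMap.nonneg_iff_isPositive _).mp h1).inner_nonneg_left (x j)
    exact (Complex.nonneg_iff.mp h2).1
  -- real-smul lemma
  have resmul : ∀ (c : ℝ) (T : H →L[ℂ] H) (v : H),
      (⟪(c • T) v, v⟫_ℂ).re = c * (⟪T v, v⟫_ℂ).re := by
    intro c T v
    rw [ContinuousLinearMap.smul_apply]
    rw [show c • T v = (c : ℂ) • T v from by simp [Complex.coe_smul]]
    rw [inner_smul_left]
    simp [Complex.mul_re]
  -- linearity on the relevant 4-dim space of functions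
  have Plin : ∀ j (c1 c2 c3 c4 : ℝ),
      P j (fun s => c1 * (f s * g s) + c2 * (h s * f s) + c3 * (h s * g s)
            + c4 * (h s * h s))
      = c1 * P j (fun s => f s * g s) + c2 * P j (fun s => h s * f s)
        + c3 * P j (fun s => h s * g s) + c4 * P j (fun s => h s * h s) := by
    intro j c1 c2 c3 c4
    have H1 : ContinuousOn (fun s => f s * g s) (spectrum ℝ (A j)) := hco j _ (hf.mul hg)
    have H2 : ContinuousOn (fun s => h s * f s) (spectrum ℝ (A j)) := hco j _ (hh.mul hf)
    have H3 : ContinuousOn (fun s => h s * g s) (spectrum ℝ (A j)) := hco j _ (hh.mul hg)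
    have H4 : ContinuousOn (fun s => h s * h s) (spectrum ℝ (A j)) := hco j _ (hh.mul hh)
    have e : cfc (fun s => c1 * (f s * g s) + c2 * (h s * f s) + c3 * (h s * g s)
            + c4 * (h s * h s)) (A j)
        = c1 • cfc (fun s => f s * g s) (A j) + c2 • cfc (fun s => h s * f s) (A j)
          + c3 • cfc (fun s => h s * g s) (A j) + c4 • cfc (fun s => h s * h s) (A j) := by
      rw [cfc_add (A j) (fun s => c1 * (f s * g s) + c2 * (h s * f s) + c3 * (h s * g s))
            (fun s => c4 * (h s * h s)) (((continuousOn_const.mul H1).add (continuousOn_const.mul H2)).add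
            (continuousOn_const.mul H3)) (continuousOn_const.mul H4),
          cfc_add (A j) (fun s => c1 * (f s * g s) + c2 * (h s * f s)) (fun s => c3 * (h s * g s))
            ((continuousOn_const.mul H1).add (continuousOn_const.mul H2))
            (continuousOn_const.mul H3),
          cfc_add (A j) (fun s => c1 * (f s * g s)) (fun s => c2 * (h s * f s))
            (continuousOn_const.mul H1) (continuousOn_const.mul H2),
          cfc_const_mul _ _ _ H1, cfc_const_mul _ _ _ H2,
          cfc_const_mul _ _ _ H3, cfc_const_mul _ _ _ H4]
    show (⟪(cfc _ (A j)) (x j), x j⟫_ℂ).re = _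
    rw [e]
    simp only [ContinuousLinearMap.add_apply, inner_add_left, Complex.add_re]
    rw [resmul, resmul, resmul, resmul]
  -- abbreviations for the moments
  let a : Fin n → ℝ := fun j => P j (fun s => h s * h s)
  let b : Fin n → ℝ := fun j => P j (fun s => f s * g s)
  let c : Fin n → ℝ := fun j => P j (fun s => h s * g s)
  let d : Fin n → ℝ := fun j => P j (fun s => h s * f s)
  -- step A
  have FA : ∀ j, ∀ t ∈ Set.Icc γ Γ,
      0 ≤ (h t * h t) * b j + (-(h t * g t)) * d j + (-(h t * f t)) * c j
        + (f t * g t) * a j := by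
    intro j t ht
    have hpos := Ppos j (fun s => (h t * f s - h s * f t) * (h t * g s - h s * g t))
      (fun s hs => hsync s hs t ht)
    have funeq : (fun s => (h t * f s - h s * f t) * (h t * g s - h s * g t))
        = fun s => (h t * h t) * (f s * g s) + (-(h t * g t)) * (h s * f s)
            + (-(h t * f t)) * (h s * g s) + (f t * g t) * (h s * h s) := by
      funext s; ring
    rw [funeq, Plin] at hpos
    exact hpos
  -- step B: pairwise inequality
  have pair : ∀ j k, 0 ≤ a j * b k + (-(c j)) * d k + (-(d j)) * c k + b j * a k := by
    intro j k
    have hpos := Ppos k (fun t => a j * (f t * g t) + (-(c j)) * (h t * f t)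
        + (-(d j)) * (h t * g t) + b j * (h t * h t)) (by
      intro t ht
      have heq : a j * (f t * g t) + (-(c j)) * (h t * f t)
          + (-(d j)) * (h t * g t) + b j * (h t * h t)
          = (h t * h t) * b j + (-(h t * g t)) * d j + (-(h t * f t)) * c j
            + (f t * g t) * a j := by ring
      show 0 ≤ a j * (f t * g t) + (-(c j)) * (h t * f t)
          + (-(d j)) * (h t * g t) + b j * (h t * h t)
      rw [heq]
      exact FA j t ht)
    rw [Plin] at hpos
    exact hpos
  -- sum the pairwise inequalities
  have sum_le : ∑ j, ∑ k, (c j * d k + d j * c k) ≤ ∑ j, ∑ k, (a j * b k + b j * a k) := by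
    refine Finset.sum_le_sum fun j _ => Finset.sum_le_sum fun k _ => ?_
    have := pair j k; linarith
  have e1 : ∑ j, ∑ k, (c j * d k + d j * c k)
      = (∑ j, c j) * (∑ j, d j) + (∑ j, d j) * (∑ j, c j) := by
    simp_rw [Finset.sum_add_distrib, ← Finset.mul_sum, ← Finset.sum_mul]
  have e2 : ∑ j, ∑ k, (a j * b k + b j * a k)
      = (∑ j, a j) * (∑ j, b j) + (∑ j, b j) * (∑ j, a j) := by
    simp_rw [Finset.sum_add_distrib, ← Finset.mul_sum, ← Finset.sum_mul]
  rw [e1, e2] at sum_le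
  -- rewrite the goal in terms of the moments
  have g1 : ∀ j, (⟪(cfc h (A j) * cfc g (A j)) (x j), x j⟫_ℂ).re = c j := by
    intro j
    rw [← cfc_mul h g (A j) (hco j h hh) (hco j g hg)]
  have g2 : ∀ j, (⟪(cfc h (A j) * cfc f (A j)) (x j), x j⟫_ℂ).re = d j := by
    intro j
    rw [← cfc_mul h f (A j) (hco j h hh) (hco j f hf)]
  have g3 : ∀ j, (⟪((cfc h (A j)) ^ 2) (x j), x j⟫_ℂ).re = a j := by
    intro j
    rw [pow_two, ← cfc_mul h h (A j) (hco j h hh) (hco j h hh)]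
  have g4 : ∀ j, (⟪(cfc f (A j) * cfc g (A j)) (x j), x j⟫_ℂ).re = b j := by
    intro j
    rw [← cfc_mul f g (A j) (hco j f hf) (hco j g hg)]
  simp_rw [g1, g2, g3, g4]
  linarith
end
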